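/- arXiv:2202.07099 — 2 statements merged into one kernel-verified Lean document; each statement's English description precedes it below -/
import Mathlib

section
/- Let F = [D; I] be the stacked first-difference and identity matrix on ℝᵀ, let θ ∈ ℝᵀ, let 𝒜 be the set of row indices i of F with (Fθ)_i ≠ 0, and let F_{−𝒜} be F with the rows in 𝒜 removed. Then the nullity of F_{−𝒜} equals the number of nonzero fused groups of θ: 𝟙{θ₁ ≠ 0} + Σ_{k=2}^{T} 𝟙{θ_k ≠ θ_{k−1} and θ_k ≠ 0}. -/
open Classical

noncomputable def lead (f : ℕ → ℝ) : ℕ → ℕ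
  | 0 => 0
  | n+1 => if f (n+1) = f n then lead f n else n+1

lemma lead_le (f : ℕ → ℝ) : ∀ n, lead f n ≤ n
  | 0 => le_rfl
  | n+1 => by
      rw [lead]; split
      · exact (lead_le f n).trans (Nat.le_succ n)
      · exact le_rfl

lemma f_lead (f : ℕ → ℝ) : ∀ n, f (lead f n) = f n
  | 0 => rfl
  | n+1 => by
      rw [lead]; split
      · rename_i h; rw [f_lead f n, h]
      · rfl

lemma lead_idem (f : ℕ → ℝ) : ∀ n, lead f (lead f n) = lead f n
  | 0 => rfl
  | n+1 => by
      rw [lead]; split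
      · exact lead_idem f n
      · rename_i h; rw [lead, if_neg h]

lemma lead_succ_iff (f : ℕ → ℝ) (n : ℕ) :
    lead f (n+1) = n+1 ↔ f (n+1) ≠ f n := by
  constructor
  · intro h hf
    have := lead_le f n
    rw [lead, if_pos hf] at h
    omega
  · intro h; rw [lead, if_neg h]

lemma v_lead (f v : ℕ → ℝ)
    (h : ∀ n, f (n+1) = f n → v (n+1) = v n) : ∀ n, v (lead f n) = v n
  | 0 => rfl
  | n+1 => by
      rw [lead]; split
      · rename_i hf; rw [v_lead f v h n, h n hf]
      · rfl

open Classical in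
theorem stmt_15 (T : ℕ) (hT : 2 ≤ T)
    (D : Matrix (Fin (T - 1)) (Fin T) ℝ)
    (hD : ∀ k t, D k t = if t.val = k.val then 1
        else if t.val = k.val + 1 then -1 else 0)
    (θ : Fin T → ℝ)
    (F : Matrix (Fin (T - 1) ⊕ Fin T) (Fin T) ℝ)
    (hF : F = Matrix.fromRows D (1 : Matrix (Fin T) (Fin T) ℝ)) :
    Module.finrank ℝ
        (LinearMap.ker
          (F.submatrix (fun i : {i // F.mulVec θ i = 0} => i.1) id).mulVecLin) =
      (if θ ⟨0, by omega⟩ ≠ 0 then 1 else 0) +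
        ∑ k : Fin (T - 1),
          if θ ⟨k.val + 1, by omega⟩ ≠ θ ⟨k.val, by omega⟩ ∧
              θ ⟨k.val + 1, by omega⟩ ≠ 0 then 1 else 0 := by
  obtain ⟨T', rfl⟩ : ∃ T', T = T' + 1 := ⟨T - 1, by omega⟩
  -- the extension of θ to ℕ
  set f : ℕ → ℝ := fun n => if h : n < T' + 1 then θ ⟨n, h⟩ else 0 with hf
  have hfθ : ∀ (n : ℕ) (h : n < T' + 1), f n = θ ⟨n, h⟩ := by
    intro n h; rw [hf]; exact dif_pos h
  -- mulVec computations
  have hmul1 : ∀ (x : Fin (T' + 1) → ℝ) (k : Fin (T' + 1 - 1)),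
      F.mulVec x (Sum.inl k) =
        x ⟨k.val, by omega⟩ - x ⟨k.val + 1, by omega⟩ := by
    intro x k
    have hk : k.val < T' := k.isLt
    have ha : ∀ t : Fin (T' + 1), F (Sum.inl k) t * x t =
        (if t = (⟨k.val, by omega⟩ : Fin (T' + 1)) then x ⟨k.val, by omega⟩ else 0)
        - (if t = (⟨k.val + 1, by omega⟩ : Fin (T' + 1)) then x ⟨k.val + 1, by omega⟩ else 0) := by
      intro t
      rw [hF]
      simp only [Matrix.fromRows_apply_inl]
      rw [hD]
      rcases eq_or_ne t (⟨k.val, by omega⟩ : Fin (T' + 1)) with h1 | h1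
      · subst h1; simp
      · rcases eq_or_ne t (⟨k.val + 1, by omega⟩ : Fin (T' + 1)) with h2 | h2
        · subst h2; simp
        · have n1 : t.val ≠ k.val := by
            intro h; exact h1 (Fin.ext h)
          have n2 : t.val ≠ k.val + 1 := by
            intro h; exact h2 (Fin.ext h)
          simp [n1, n2, h1, h2]
    unfold Matrix.mulVec dotProduct
    rw [Finset.sum_congr rfl (fun t _ => ha t)]
    rw [Finset.sum_sub_distrib]
    simp
  have hmul2 : ∀ (x : Fin (T' + 1) → ℝ) (t : Fin (T' + 1)),
      F.mulVec x (Sum.inr t) = x t := by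
    intro x t
    rw [hF]
    unfold Matrix.mulVec dotProduct
    simp [Matrix.one_apply]
  -- kernel membership
  have hker : ∀ v : Fin (T' + 1) → ℝ,
      v ∈ LinearMap.ker
          (F.submatrix (fun i : {i // F.mulVec θ i = 0} => i.1) id).mulVecLin ↔
        ∀ i, F.mulVec θ i = 0 → F.mulVec v i = 0 := by
    intro v
    rw [LinearMap.mem_ker]
    constructor
    · intro h i hi
      have := congrFun h ⟨i, hi⟩
      rw [Matrix.mulVecLin_apply] at this
      simpa [Matrix.mulVecLin_apply, Matrix.submatrix_mulVec_equiv,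
        Matrix.mulVec, dotProduct, Matrix.submatrix_apply] using this
    · intro h
      funext i
      have := h i.1 i.2
      rw [Matrix.mulVecLin_apply]
      exact this
  -- constraints satisfied by kernel elements
  have hzero : ∀ v : Fin (T' + 1) → ℝ, (∀ i, F.mulVec θ i = 0 → F.mulVec v i = 0) →
      ∀ t : Fin (T' + 1), θ t = 0 → v t = 0 := by
    intro v h t ht
    have := h (Sum.inr t) (by rw [hmul2]; exact ht)
    rwa [hmul2] at this
  have hdiff : ∀ v : Fin (T' + 1) → ℝ, (∀ i, F.mulVec θ i = 0 → F.mulVec v i = 0) →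
      ∀ k : Fin (T' + 1 - 1), θ ⟨k.val, by omega⟩ = θ ⟨k.val + 1, by omega⟩ →
        v ⟨k.val, by omega⟩ = v ⟨k.val + 1, by omega⟩ := by
    intro v h k hk
    have := h (Sum.inl k) (by rw [hmul1, sub_eq_zero]; exact hk)
    rw [hmul1, sub_eq_zero] at this
    exact this
  -- extension of a vector to ℕ
  set V : (Fin (T' + 1) → ℝ) → ℕ → ℝ :=
    fun v m => if h : m < T' + 1 then v ⟨m, h⟩ else 0 with hV
  have hVprop : ∀ v : Fin (T' + 1) → ℝ, (∀ i, F.mulVec θ i = 0 → F.mulVec v i = 0) →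
      ∀ n, f (n + 1) = f n → V v (n + 1) = V v n := by
    intro v h n hn
    by_cases h1 : n + 1 < T' + 1
    · have h0 : n < T' + 1 := by omega
      have hk : n < T' + 1 - 1 := by omega
      rw [hfθ _ h1, hfθ _ h0] at hn
      have := hdiff v h ⟨n, hk⟩ hn.symm
      simp only [hV, dif_pos h1, dif_pos h0]
      exact this.symm
    · by_cases h2 : n + 1 = T' + 1
      · have h0 : n < T' + 1 := by omega
        have hfn1 : f (n + 1) = 0 := by rw [hf]; exact dif_neg h1
        have hfn : f n = 0 := by rw [← hn]; exact hfn1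
        rw [hfθ _ h0] at hfn
        have := hzero v h ⟨n, h0⟩ hfn
        simp only [hV, dif_neg h1, dif_pos h0]
        exact this.symm
      · have h0 : ¬ n < T' + 1 := by omega
        simp only [hV, dif_neg h1, dif_neg h0]
  have hlead_eq : ∀ v : Fin (T' + 1) → ℝ, (∀ i, F.mulVec θ i = 0 → F.mulVec v i = 0) →
      ∀ t : Fin (T' + 1),
        v ⟨lead f t.val, lt_of_le_of_lt (lead_le f t.val) t.isLt⟩ = v t := by
    intro v h t
    have h1 := v_lead f (V v) (hVprop v h) t.val
    have hlt : lead f t.val < T' + 1 := lt_of_le_of_lt (lead_le f t.val) t.isLt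
    simp only [hV, dif_pos hlt, dif_pos t.isLt, Fin.eta] at h1
    exact h1
  -- the subtype of block leaders
  set p : Fin (T' + 1) → Prop := fun t => θ t ≠ 0 ∧ lead f t.val = t.val with hp
  -- facts about leaders
  have hθlead : ∀ t : Fin (T' + 1),
      θ ⟨lead f t.val, lt_of_le_of_lt (lead_le f t.val) t.isLt⟩ = θ t := by
    intro t
    have hlt : lead f t.val < T' + 1 := lt_of_le_of_lt (lead_le f t.val) t.isLt
    rw [← hfθ _ hlt, f_lead f t.val, hfθ _ t.isLt, Fin.eta]
  -- the restriction map
  set φ : (LinearMap.ker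
        (F.submatrix (fun i : {i // F.mulVec θ i = 0} => i.1) id).mulVecLin)
      →ₗ[ℝ] ({t : Fin (T' + 1) // p t} → ℝ) :=
    { toFun := fun v s => (v : Fin (T' + 1) → ℝ) s.1
      map_add' := fun _ _ => rfl
      map_smul' := fun _ _ => rfl } with hφ
  have hinj : Function.Injective φ := by
    intro v w hvw
    have hsub : ∀ u : (LinearMap.ker
        (F.submatrix (fun i : {i // F.mulVec θ i = 0} => i.1) id).mulVecLin),
        ∀ i, F.mulVec θ i = 0 → F.mulVec (u : Fin (T' + 1) → ℝ) i = 0 :=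
      fun u => (hker u).mp u.2
    apply Subtype.ext
    funext t
    have hcond : ∀ i, F.mulVec θ i = 0 →
        F.mulVec ((v : Fin (T' + 1) → ℝ) - (w : Fin (T' + 1) → ℝ)) i = 0 := by
      intro i hi
      rw [Matrix.mulVec_sub]
      simp [hsub v i hi, hsub w i hi]
    set u : Fin (T' + 1) → ℝ := (v : Fin (T' + 1) → ℝ) - (w : Fin (T' + 1) → ℝ) with hu
    have hgoal : u t = 0 := by
      rcases eq_or_ne (θ t) 0 with h0 | h0
      · exact hzero u hcond t h0
      · have hlt : lead f t.val < T' + 1 := lt_of_le_of_lt (lead_le f t.val) t.isLt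
        have pm : p ⟨lead f t.val, hlt⟩ := by
          constructor
          · rw [hθlead t]; exact h0
          · exact lead_idem f t.val
        have hc := congrFun hvw ⟨⟨lead f t.val, hlt⟩, pm⟩
        have : u ⟨lead f t.val, hlt⟩ = 0 := by
          simp only [hφ, hu, Pi.sub_apply] at hc ⊢
          simp only [LinearMap.coe_mk, AddHom.coe_mk] at hc
          rw [hc, sub_self]
        rw [← hlead_eq u hcond t]
        exact this
    have := sub_eq_zero.mp hgoal
    exact this
  have hsurj : Function.Surjective φ := by
    intro c
    set w : Fin (T' + 1) → ℝ := fun t =>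
      if h : θ t = 0 then 0
      else c ⟨⟨lead f t.val, lt_of_le_of_lt (lead_le f t.val) t.isLt⟩,
        ⟨by rw [hθlead t]; exact h, lead_idem f t.val⟩⟩ with hw
    have hwmem : ∀ i, F.mulVec θ i = 0 → F.mulVec w i = 0 := by
      intro i hi
      rcases i with k | t
      · rw [hmul1, sub_eq_zero]
        rw [hmul1, sub_eq_zero] at hi
        have hk : k.val < T' := k.isLt
        have hfeq : f (k.val + 1) = f k.val := by
          rw [hfθ _ (by omega : k.val + 1 < T' + 1), hfθ _ (by omega : k.val < T' + 1)]
          exact hi.symm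
        have hleq : lead f (k.val + 1) = lead f k.val := by
          rw [lead, if_pos hfeq]
        rcases eq_or_ne (θ (⟨k.val, by omega⟩ : Fin (T' + 1))) 0 with h0 | h0
        · rw [hw]
          simp only
          rw [dif_pos h0, dif_pos (by rw [← hi]; exact h0)]
        · rw [hw]
          simp only
          rw [dif_neg h0, dif_neg (by rw [← hi]; exact h0)]
          congr 1
          exact Subtype.ext (Fin.ext hleq.symm)
      · rw [hmul2] at hi ⊢
        rw [hw]
        simp only
        rw [dif_pos hi]
    refine ⟨⟨w, (hker w).mpr hwmem⟩, ?_⟩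
    funext s
    obtain ⟨t, h1, h2⟩ := s
    simp only [hφ, LinearMap.coe_mk, AddHom.coe_mk]
    show w t = c ⟨t, h1, h2⟩
    rw [hw]
    simp only
    rw [dif_neg h1]
    congr 1
    exact Subtype.ext (Fin.ext h2)
  have e := LinearEquiv.ofBijective φ ⟨hinj, hsurj⟩
  rw [e.finrank_eq, Module.finrank_fintype_fun_eq_card]
  rw [Fintype.card_subtype, Finset.card_filter, Fin.sum_univ_succ]
  congr 1
  · apply if_congr _ rfl rfl
    rw [hp]
    simp only
    constructor
    · intro h; exact h.1
    · intro h; exact ⟨h, rfl⟩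
  · apply Finset.sum_congr rfl
    intro i _
    apply if_congr _ rfl rfl
    rw [hp]
    simp only
    have hs : (Fin.succ i).val = i.val + 1 := rfl
    rw [hs, lead_succ_iff, hfθ _ (by omega : i.val + 1 < T' + 1),
      hfθ _ (by omega : (i.val : ℕ) < T' + 1)]
    constructor
    · intro ⟨a, b⟩
      exact ⟨b, by exact a⟩
    · intro ⟨a, b⟩
      exact ⟨by exact b, a⟩
end

section
/- (Optimism identity) Let y and y_new be i.i.d. random vectors in ℝⁿ with mean μ and componentwise variance σ² (finite second moments), with y_new independent of y, and let μ̂ = δ(y) for a measurable function δ with E‖δ(y)‖² < ∞. Then E‖y_new − μ̂‖² − E‖y − μ̂‖² = 2 Σ_{i=1}^n Cov(y_i, μ̂_i). -/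
open MeasureTheory ProbabilityTheory

private lemma abs_mul_le_sq' (a b : ℝ) : ‖a * b‖ ≤ a ^ 2 + b ^ 2 := by
  rw [Real.norm_eq_abs]
  rcases abs_cases (a * b) with ⟨h, _⟩ | ⟨h, _⟩ <;> rw [h] <;>
    nlinarith [sq_nonneg (a + b), sq_nonneg (a - b)]

theorem stmt_18 (n : ℕ) {Ω : Type*} [MeasureSpace Ω] [IsProbabilityMeasure (ℙ : Measure Ω)]
    (y ynew : Ω → (Fin n → ℝ)) (δ : (Fin n → ℝ) → (Fin n → ℝ))
    (hy : Measurable y) (hynew : Measurable ynew) (hδ : Measurable δ)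
    (hid : IdentDistrib y ynew)
    (hindep : IndepFun y ynew)
    (μv : Fin n → ℝ) (hmean : ∀ i, ∫ ω, y ω i = μv i)
    (hy2 : Integrable (fun ω => ∑ i, (y ω i) ^ 2))
    (hδ2 : Integrable (fun ω => ∑ i, (δ (y ω) i) ^ 2)) :
    (∫ ω, ∑ i, (ynew ω i - δ (y ω) i) ^ 2) - (∫ ω, ∑ i, (y ω i - δ (y ω) i) ^ 2) =
      2 * ∑ i, ∫ ω, (y ω i - μv i) * (δ (y ω) i - ∫ ω', δ (y ω') i) := by
  have hym : ∀ i, Measurable fun ω => y ω i := fun i => (measurable_pi_apply i).comp hy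
  have hynm : ∀ i, Measurable fun ω => ynew ω i := fun i => (measurable_pi_apply i).comp hynew
  have hdm : ∀ i, Measurable fun ω => δ (y ω) i :=
    fun i => (measurable_pi_apply i).comp (hδ.comp hy)
  have hyi2 : ∀ i, Integrable fun ω => (y ω i) ^ 2 := by
    intro i
    refine hy2.mono' ((hym i).pow_const 2).aestronglyMeasurable (ae_of_all _ fun ω => ?_)
    rw [Real.norm_eq_abs, abs_of_nonneg (sq_nonneg _)]
    exact Finset.single_le_sum (f := fun j => (y ω j) ^ 2) (fun j _ => sq_nonneg _)
      (Finset.mem_univ i)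
  have hdi2 : ∀ i, Integrable fun ω => (δ (y ω) i) ^ 2 := by
    intro i
    refine hδ2.mono' ((hdm i).pow_const 2).aestronglyMeasurable (ae_of_all _ fun ω => ?_)
    rw [Real.norm_eq_abs, abs_of_nonneg (sq_nonneg _)]
    exact Finset.single_le_sum (f := fun j => (δ (y ω) j) ^ 2) (fun j _ => sq_nonneg _)
      (Finset.mem_univ i)
  have hidi : ∀ i, IdentDistrib (fun ω => y ω i) (fun ω => ynew ω i) :=
    fun i => hid.comp (measurable_pi_apply i)
  have hyni2 : ∀ i, Integrable fun ω => (ynew ω i) ^ 2 := by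
    intro i
    exact (((hidi i).comp (measurable_id.pow_const 2)).integrable_iff).mp (hyi2 i)
  have l1 : ∀ (f : Ω → ℝ), Measurable f → Integrable (fun ω => (f ω) ^ 2) →
      Integrable f := by
    intro f hf h2
    refine (h2.add (integrable_const 1)).mono' hf.aestronglyMeasurable
      (ae_of_all _ fun ω => ?_)
    rw [Real.norm_eq_abs, Pi.add_apply]
    rcases abs_cases (f ω) with ⟨h, _⟩ | ⟨h, _⟩ <;> rw [h] <;>
      nlinarith [sq_nonneg (f ω - 1), sq_nonneg (f ω + 1)]
  have hyi1 : ∀ i, Integrable fun ω => y ω i := fun i => l1 _ (hym i) (hyi2 i)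
  have hyni1 : ∀ i, Integrable fun ω => ynew ω i := fun i => l1 _ (hynm i) (hyni2 i)
  have hdi1 : ∀ i, Integrable fun ω => δ (y ω) i := fun i => l1 _ (hdm i) (hdi2 i)
  have hprod : ∀ i, Integrable fun ω => y ω i * δ (y ω) i := by
    intro i
    exact ((hyi2 i).add (hdi2 i)).mono' ((hym i).mul (hdm i)).aestronglyMeasurable
      (ae_of_all _ fun ω => abs_mul_le_sq' _ _)
  have hprodn : ∀ i, Integrable fun ω => ynew ω i * δ (y ω) i := by
    intro i
    exact ((hyni2 i).add (hdi2 i)).mono' ((hynm i).mul (hdm i)).aestronglyMeasurable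
      (ae_of_all _ fun ω => abs_mul_le_sq' _ _)
  have hind : ∀ i, IndepFun (fun ω => ynew ω i) (fun ω => δ (y ω) i) :=
    fun i => hindep.symm.comp (measurable_pi_apply i) ((measurable_pi_apply i).comp hδ)
  have hmeann : ∀ i, ∫ ω, ynew ω i = μv i := fun i => ((hidi i).integral_eq).symm.trans (hmean i)
  have hsqeq : ∀ i, ∫ ω, (ynew ω i) ^ 2 = ∫ ω, (y ω i) ^ 2 :=
    fun i => (((hidi i).comp (measurable_id.pow_const 2)).integral_eq).symm
  have hsqd : ∀ i, Integrable fun ω => (ynew ω i - δ (y ω) i) ^ 2 := by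
    intro i
    have h : (fun ω => (ynew ω i - δ (y ω) i) ^ 2)
        = fun ω => (ynew ω i) ^ 2 - 2 * (ynew ω i * δ (y ω) i) + (δ (y ω) i) ^ 2 := by
      funext ω; ring
    rw [h]
    exact (((hyni2 i).sub ((hprodn i).const_mul 2)).add (hdi2 i))
  have hsqd' : ∀ i, Integrable fun ω => (y ω i - δ (y ω) i) ^ 2 := by
    intro i
    have h : (fun ω => (y ω i - δ (y ω) i) ^ 2)
        = fun ω => (y ω i) ^ 2 - 2 * (y ω i * δ (y ω) i) + (δ (y ω) i) ^ 2 := by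
      funext ω; ring
    rw [h]
    exact (((hyi2 i).sub ((hprod i).const_mul 2)).add (hdi2 i))
  rw [integral_finset_sum _ (fun i _ => hsqd i), integral_finset_sum _ (fun i _ => hsqd' i),
    ← Finset.sum_sub_distrib, Finset.mul_sum]
  refine Finset.sum_congr rfl fun i _ => ?_
  set m : ℝ := ∫ ω', δ (y ω') i with hm
  have h2n : Integrable (fun ω => 2 * (ynew ω i * δ (y ω) i)) ℙ := (hprodn i).const_mul 2
  have h2y : Integrable (fun ω => 2 * (y ω i * δ (y ω) i)) ℙ := (hprod i).const_mul 2
  have e1 : ∫ ω, (ynew ω i - δ (y ω) i) ^ 2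
      = (∫ ω, (ynew ω i) ^ 2) - 2 * ((∫ ω, ynew ω i) * m) + (∫ ω, (δ (y ω) i) ^ 2) := by
    have h : (fun ω => (ynew ω i - δ (y ω) i) ^ 2)
        = fun ω => ((ynew ω i) ^ 2 - 2 * (ynew ω i * δ (y ω) i)) + (δ (y ω) i) ^ 2 := by
      funext ω; ring
    have hsub : Integrable (fun ω => (ynew ω i) ^ 2 - 2 * (ynew ω i * δ (y ω) i)) ℙ :=
      (hyni2 i).sub h2n
    have hQ : ∫ ω, ynew ω i * δ (y ω) i = (∫ ω, ynew ω i) * m :=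
      (hind i).integral_fun_mul_eq_mul_integral (hyni1 i).aestronglyMeasurable
        (hdi1 i).aestronglyMeasurable
    rw [h, integral_add hsub (hdi2 i), integral_sub (hyni2 i) h2n, integral_const_mul, hQ]
  have e2 : ∫ ω, (y ω i - δ (y ω) i) ^ 2
      = (∫ ω, (y ω i) ^ 2) - 2 * (∫ ω, y ω i * δ (y ω) i) + (∫ ω, (δ (y ω) i) ^ 2) := by
    have h : (fun ω => (y ω i - δ (y ω) i) ^ 2)
        = fun ω => ((y ω i) ^ 2 - 2 * (y ω i * δ (y ω) i)) + (δ (y ω) i) ^ 2 := by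
      funext ω; ring
    have hsub : Integrable (fun ω => (y ω i) ^ 2 - 2 * (y ω i * δ (y ω) i)) ℙ :=
      (hyi2 i).sub h2y
    rw [h, integral_add hsub (hdi2 i), integral_sub (hyi2 i) h2y, integral_const_mul]
  have e3 : ∫ ω, (y ω i - μv i) * (δ (y ω) i - m)
      = (∫ ω, y ω i * δ (y ω) i) - μv i * m := by
    have h : (fun ω => (y ω i - μv i) * (δ (y ω) i - m))
        = fun ω => (y ω i * δ (y ω) i - m * y ω i) - (μv i * δ (y ω) i - μv i * m) := by
      funext ω; ring
    have hmy : Integrable (fun ω => m * y ω i) ℙ := (hyi1 i).const_mul m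
    have hmd : Integrable (fun ω => μv i * δ (y ω) i) ℙ := (hdi1 i).const_mul (μv i)
    have hc : Integrable (fun _ : Ω => μv i * m) ℙ := integrable_const _
    have hA : Integrable (fun ω => y ω i * δ (y ω) i - m * y ω i) ℙ := (hprod i).sub hmy
    have hB : Integrable (fun ω => μv i * δ (y ω) i - μv i * m) ℙ := hmd.sub hc
    rw [h, integral_sub hA hB, integral_sub (hprod i) hmy, integral_sub hmd hc,
      integral_const_mul, integral_const_mul, integral_const, hmean i]
    simp [measure_univ]
    ring
  rw [e1, e2, e3, hsqeq i, hmeann i]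
  ring
end
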